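/- Let d ≥ 5 be an integer and let k = ⌊d/2⌋. In the presented group G on two generators a, b with relators a^d b^d together with a^{d−i} b^i and b^{d−i} a^i for every i ∈ {0} ∪ {2, 3, …, k}, the images of a and b are equal, and G is generated by the image of a; in particular G is commutative. -/

import Mathlib

/-- The generator `a` of the free group on two generators. -/
def genA : FreeGroup (Fin 2) := FreeGroup.of 0

/-- The generator `b` of the free group on two generators. -/
def genB : FreeGroup (Fin 2) := FreeGroup.of 1

/-- The relators `a^d b^d`, together with `a^(d-i) b^i` and `b^(d-i) a^i`
for every `i ∈ {0} ∪ {2, 3, …, ⌊d/2⌋}`. -/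
def nestRels (d : ℕ) : Set (FreeGroup (Fin 2)) :=
  {genA ^ d * genB ^ d} ∪
    ⋃ i ∈ ({0} ∪ Set.Icc 2 (d / 2) : Set ℕ),
      {genA ^ (d - i) * genB ^ i, genB ^ (d - i) * genA ^ i}

lemma rel_eq_one {d : ℕ} {r : FreeGroup (Fin 2)} (hr : r ∈ nestRels d) :
    (QuotientGroup.mk r : PresentedGroup (nestRels d)) = 1 :=
  (QuotientGroup.eq_one_iff r).2 (Subgroup.subset_normalClosure hr)

lemma mk_pow_mul {d : ℕ} (x y : FreeGroup (Fin 2)) (m n : ℕ) :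
    (QuotientGroup.mk (x ^ m * y ^ n) : PresentedGroup (nestRels d)) =
      (QuotientGroup.mk x : PresentedGroup (nestRels d)) ^ m *
      (QuotientGroup.mk y : PresentedGroup (nestRels d)) ^ n := by
  rfl

theorem nest_presented_group_abelian (d : ℕ) (hd : 5 ≤ d) :
    (PresentedGroup.of (rels := nestRels d) 0 = PresentedGroup.of 1) ∧
      Subgroup.zpowers (PresentedGroup.of (rels := nestRels d) 0) = ⊤ ∧
      ∀ x y : PresentedGroup (nestRels d), x * y = y * x := by
  set A : PresentedGroup (nestRels d) := PresentedGroup.of 0 with hA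
  set B : PresentedGroup (nestRels d) := PresentedGroup.of 1 with hB
  have hmemAB : ∀ i, i ∈ ({0} ∪ Set.Icc 2 (d / 2) : Set ℕ) →
      A ^ (d - i) * B ^ i = 1 ∧ B ^ (d - i) * A ^ i = 1 := by
    intro i hi
    constructor
    · have : (genA ^ (d - i) * genB ^ i) ∈ nestRels d := by
        right; exact Set.mem_biUnion hi (by left; rfl)
      exact rel_eq_one this
    · have : (genB ^ (d - i) * genA ^ i) ∈ nestRels d := by
        right; exact Set.mem_biUnion hi (by right; rfl)
      exact rel_eq_one this
  have h0 := hmemAB 0 (Or.inl rfl)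
  have hAd : A ^ d = 1 := by simpa using h0.1
  have hBd : B ^ d = 1 := by simpa using h0.2
  have h2 := hmemAB 2 (Or.inr ⟨le_refl 2, Nat.le_div_iff_mul_le (by norm_num) |>.2 (by omega)⟩)
  have hA2B2 : A ^ 2 = B ^ 2 := by
    have hsum : A ^ 2 * A ^ (d - 2) = 1 := by
      rw [← pow_add, show 2 + (d - 2) = d by omega]; exact hAd
    have := h2.1
    calc A ^ 2 = (A ^ (d - 2))⁻¹ := eq_inv_of_mul_eq_one_left hsum
    _ = B ^ 2 := inv_eq_of_mul_eq_one_right this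
  have hABeq : A = B := by
    rcases Nat.even_or_odd d with he | ho
    · -- d even, d ≥ 6, use i = 3
      obtain ⟨m, hm⟩ := he
      have h3 := hmemAB 3 (Or.inr ⟨by norm_num, by omega⟩)
      have hA3B3 : A ^ 3 = B ^ 3 := by
        have hsum : A ^ 3 * A ^ (d - 3) = 1 := by
          rw [← pow_add, show 3 + (d - 3) = d by omega]; exact hAd
        have := h3.1
        calc A ^ 3 = (A ^ (d - 3))⁻¹ := eq_inv_of_mul_eq_one_left hsum
        _ = B ^ 3 := inv_eq_of_mul_eq_one_right this
      calc A = A ^ 3 * (A ^ 2)⁻¹ := by group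
      _ = B ^ 3 * (B ^ 2)⁻¹ := by rw [hA3B3, hA2B2]
      _ = B := by group
    · -- d odd
      obtain ⟨m, hm⟩ := ho
      have : A ^ (d + 1) = B ^ (d + 1) := by
        have : (A ^ 2) ^ (m + 1) = (B ^ 2) ^ (m + 1) := by rw [hA2B2]
        rw [← pow_mul, ← pow_mul] at this
        have h2m : 2 * (m + 1) = d + 1 := by omega
        rwa [h2m] at this
      calc A = A ^ (d + 1) := by rw [pow_succ, hAd, one_mul]
      _ = B ^ (d + 1) := this
      _ = B := by rw [pow_succ, hBd, one_mul]
  have htop : Subgroup.zpowers A = ⊤ := by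
    rw [eq_top_iff, ← PresentedGroup.closure_range_of (nestRels d), Subgroup.closure_le]
    rintro x ⟨i, rfl⟩
    revert i
    rw [Fin.forall_fin_two]
    exact ⟨Subgroup.mem_zpowers A, by rw [← hB, ← hABeq]; exact Subgroup.mem_zpowers A⟩
  refine ⟨hABeq, htop, ?_⟩
  intro x y
  have hx : x ∈ Subgroup.zpowers A := htop ▸ Subgroup.mem_top x
  have hy : y ∈ Subgroup.zpowers A := htop ▸ Subgroup.mem_top y
  obtain ⟨n, rfl⟩ := hx
  obtain ⟨m, rfl⟩ := hy
  rw [← zpow_add, ← zpow_add, add_comm]
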